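/- Fix α ∈ (1,2], β > 0, Δ ∈ (0,1) with 1/Δ ∈ ℕ, δ > 0 with δ = βΔ^α (note c₁ = 1 when k = 1, α ∈ (1,2]), and δ₁ = δ/Δ. Let f : [0,1] → [0,1] be differentiable with |f(x)| ≤ β, |f'(x)| ≤ β, and |f'(y) − f'(x)| ≤ β|y−x|^{α−1} for all x,y ∈ [0,1]. For each m ∈ {1,…,1/Δ} with cell center x_m = (m−1/2)Δ, let h⁽⁰⁾(m) be an integer closest to f(x_m)/δ and h⁽¹⁾(m) an integer closest to f'(x_m)/δ₁. Then for every m ∈ {1,…,1/Δ − 1}: |h⁽¹⁾(m+1) − h⁽¹⁾(m)| < 3, |h⁽⁰⁾(m+1) − h⁽⁰⁾(m) − h⁽¹⁾(m)| < 3, and |h⁽⁰⁾(m) − h⁽⁰⁾(m+1) + h⁽¹⁾(m+1)| < 3. -/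

import Mathlib

/-- Taylor-type bound from Hölder continuity of the derivative. -/
lemma taylor_aux {α β : ℝ} (hα₁ : 1 ≤ α) (hβ : 0 ≤ β) (f f' : ℝ → ℝ)
    (hdiff : ∀ x ∈ Set.Icc (0:ℝ) 1, HasDerivWithinAt f (f' x) (Set.Icc (0:ℝ) 1) x)
    (hhold : ∀ x ∈ Set.Icc (0:ℝ) 1, ∀ y ∈ Set.Icc (0:ℝ) 1,
      |f' y - f' x| ≤ β * |y - x| ^ (α - 1))
    {a b c : ℝ} (ha : a ∈ Set.Icc (0:ℝ) 1) (hb : b ∈ Set.Icc (0:ℝ) 1)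
    (hab : a ≤ b) (hc : c ∈ Set.Icc a b) :
    |f b - f a - f' c * (b - a)| ≤ β * (b - a) ^ (α - 1) * (b - a) := by
  have hsub : Set.Icc a b ⊆ Set.Icc (0:ℝ) 1 := Set.Icc_subset_Icc ha.1 hb.2
  have hcmem : c ∈ Set.Icc (0:ℝ) 1 := hsub hc
  have hg : ∀ t ∈ Set.Icc a b,
      HasDerivWithinAt (fun t => f t - f' c * t) (f' t - f' c) (Set.Icc a b) t := by
    intro t ht
    have h1 := ((hdiff t (hsub ht)).mono hsub).sub
      ((hasDerivWithinAt_id t (Set.Icc a b)).const_mul (f' c))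
    exact h1.congr_deriv (by ring)
  have hbound : ∀ t ∈ Set.Icc a b, ‖f' t - f' c‖ ≤ β * (b - a) ^ (α - 1) := by
    intro t ht
    have h1 := hhold c hcmem t (hsub ht)
    have h2 : |t - c| ≤ b - a := by
      rw [abs_sub_le_iff]
      constructor <;> [linarith [ht.2, hc.1]; linarith [ht.1, hc.2]]
    have h3 : |t - c| ^ (α - 1) ≤ (b - a) ^ (α - 1) :=
      Real.rpow_le_rpow (abs_nonneg _) h2 (by linarith)
    calc ‖f' t - f' c‖ = |f' t - f' c| := rfl
      _ ≤ β * |t - c| ^ (α - 1) := h1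
      _ ≤ β * (b - a) ^ (α - 1) := by
          exact mul_le_mul_of_nonneg_left h3 hβ
  have key := (convex_Icc a b).norm_image_sub_le_of_norm_hasDerivWithin_le hg hbound
    (Set.left_mem_Icc.2 hab) (Set.right_mem_Icc.2 hab)
  have e : (f b - f' c * b) - (f a - f' c * a) = f b - f a - f' c * (b - a) := by ring
  rw [Real.norm_eq_abs, Real.norm_eq_abs, e, abs_of_nonneg (by linarith : (0:ℝ) ≤ b - a)] at key
  exact key

set_option maxHeartbeats 1000000 in
/-- quantized Taylor coefficients at adjacent cells satisfy the
good-continuation condition (k = 1, α ∈ (1,2]). -/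
theorem good_continuation (α β Δ : ℝ) (hα₁ : 1 < α) (hα₂ : α ≤ 2) (hβ : 0 < β)
    (hΔ : Δ ∈ Set.Ioo (0:ℝ) 1) (hΔnat : ∃ n : ℕ, (n : ℝ) = 1 / Δ)
    (δ : ℝ) (hδ : δ = β * Δ ^ α)
    (f f' : ℝ → ℝ)
    (hrange : ∀ x ∈ Set.Icc (0:ℝ) 1, f x ∈ Set.Icc (0:ℝ) 1)
    (hdiff : ∀ x ∈ Set.Icc (0:ℝ) 1, HasDerivWithinAt f (f' x) (Set.Icc (0:ℝ) 1) x)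
    (hf : ∀ x ∈ Set.Icc (0:ℝ) 1, |f x| ≤ β)
    (hf' : ∀ x ∈ Set.Icc (0:ℝ) 1, |f' x| ≤ β)
    (hhold : ∀ x ∈ Set.Icc (0:ℝ) 1, ∀ y ∈ Set.Icc (0:ℝ) 1,
      |f' y - f' x| ≤ β * |y - x| ^ (α - 1))
    (h0 h1 : ℕ → ℤ)
    (hh0 : ∀ m : ℕ, 1 ≤ m → (m : ℝ) ≤ 1 / Δ →
      |(h0 m : ℝ) - f (((m : ℝ) - 1/2) * Δ) / δ| ≤ 1/2)
    (hh1 : ∀ m : ℕ, 1 ≤ m → (m : ℝ) ≤ 1 / Δ →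
      |(h1 m : ℝ) - f' (((m : ℝ) - 1/2) * Δ) / (δ / Δ)| ≤ 1/2) :
    ∀ m : ℕ, 1 ≤ m → ((m : ℝ) + 1) ≤ 1 / Δ →
      |h1 (m + 1) - h1 m| < 3 ∧
      |h0 (m + 1) - h0 m - h1 m| < 3 ∧
      |h0 m - h0 (m + 1) + h1 (m + 1)| < 3 := by
  intro m hm hm1
  obtain ⟨hΔ0, hΔ1⟩ := hΔ
  have hm' : (1:ℝ) ≤ (m:ℝ) := by exact_mod_cast hm
  have hΔα : (0:ℝ) < Δ ^ α := Real.rpow_pos_of_pos hΔ0 α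
  have hδ0 : 0 < δ := by rw [hδ]; positivity
  have hδ1 : 0 < δ / Δ := div_pos hδ0 hΔ0
  set a : ℝ := ((m:ℝ) - 1/2) * Δ with ha_def
  set b : ℝ := (((m:ℝ) + 1) - 1/2) * Δ with hb_def
  have hba : b - a = Δ := by rw [ha_def, hb_def]; ring
  have hΔle : ((m:ℝ) + 1) * Δ ≤ 1 := by
    have := mul_le_mul_of_nonneg_right hm1 (le_of_lt hΔ0)
    rwa [one_div, inv_mul_cancel₀ (ne_of_gt hΔ0)] at this
  have ha : a ∈ Set.Icc (0:ℝ) 1 := by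
    constructor
    · rw [ha_def]; nlinarith
    · rw [ha_def]; nlinarith
  have hb : b ∈ Set.Icc (0:ℝ) 1 := by
    constructor
    · rw [hb_def]; nlinarith
    · rw [hb_def]; nlinarith
  have hab : a ≤ b := by rw [ha_def, hb_def]; nlinarith
  -- δ / Δ = β * Δ ^ (α - 1)
  have hpow : Δ ^ (α - 1) * Δ = Δ ^ α := by
    rw [← Real.rpow_add_one (ne_of_gt hΔ0) (α - 1)]
    ring_nf
  have hδΔ : δ / Δ = β * Δ ^ (α - 1) := by
    rw [hδ, ← hpow]; field_simp
  -- Hölder bound between a and b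
  have hhab : |f' b - f' a| ≤ δ / Δ := by
    have := hhold a ha b hb
    rw [show b - a = Δ from hba] at this
    rw [abs_of_pos hΔ0] at this
    rw [hδΔ]; exact this
  -- Taylor bounds
  have hT1 : |f b - f a - f' a * Δ| ≤ δ := by
    have := taylor_aux (le_of_lt hα₁) (le_of_lt hβ) f f' hdiff hhold ha hb hab
      (Set.left_mem_Icc.2 hab)
    rw [hba] at this
    rw [hδ, ← hpow]
    calc |f b - f a - f' a * Δ| ≤ β * Δ ^ (α - 1) * Δ := this
      _ = β * (Δ ^ (α - 1) * Δ) := (mul_assoc _ _ _)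
  have hT2 : |f b - f a - f' b * Δ| ≤ δ := by
    have := taylor_aux (le_of_lt hα₁) (le_of_lt hβ) f f' hdiff hhold ha hb hab
      (Set.right_mem_Icc.2 hab)
    rw [hba] at this
    rw [hδ, ← hpow]
    calc |f b - f a - f' b * Δ| ≤ β * Δ ^ (α - 1) * Δ := this
      _ = β * (Δ ^ (α - 1) * Δ) := (mul_assoc _ _ _)
  -- quantization bounds
  have hma : (m:ℝ) ≤ 1 / Δ := by linarith
  have q0a := hh0 m hm hma
  have q1a := hh1 m hm hma
  have q0b := hh0 (m + 1) (by omega) (by push_cast; linarith)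
  have q1b := hh1 (m + 1) (by omega) (by push_cast; linarith)
  push_cast at q0b q1b
  rw [← ha_def] at q0a q1a
  rw [← hb_def] at q0b q1b
  -- extract linear inequalities
  rw [abs_le] at q0a q1a q0b q1b hhab hT1 hT2
  have r1 : |(f' b - f' a) / (δ / Δ)| ≤ 1 := by
    rw [abs_div, abs_of_pos hδ1, div_le_one hδ1, abs_le]; exact hhab
  have r2 : |(f b - f a - f' a * Δ) / δ| ≤ 1 := by
    rw [abs_div, abs_of_pos hδ0, div_le_one hδ0, abs_le]; exact hT1
  have r3 : |(f b - f a - f' b * Δ) / δ| ≤ 1 := by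
    rw [abs_div, abs_of_pos hδ0, div_le_one hδ0, abs_le]; exact hT2
  rw [abs_le] at r1 r2 r3
  have hδne : δ ≠ 0 := ne_of_gt hδ0
  have hΔne : Δ ≠ 0 := ne_of_gt hΔ0
  refine ⟨?_, ?_, ?_⟩
  · have : |((h1 (m+1) : ℝ)) - (h1 m : ℝ)| < 3 := by
      rw [abs_lt]
      have e : (f' b - f' a) / (δ / Δ) = f' b / (δ / Δ) - f' a / (δ / Δ) := sub_div _ _ _
      constructor <;> linarith [q1a.1, q1a.2, q1b.1, q1b.2, r1.1, r1.2, e]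
    have := this
    rw [show ((h1 (m+1) : ℝ)) - (h1 m : ℝ) = ((h1 (m+1) - h1 m : ℤ) : ℝ) by push_cast; ring] at this
    exact_mod_cast this
  · have : |((h0 (m+1) : ℝ)) - (h0 m : ℝ) - (h1 m : ℝ)| < 3 := by
      rw [abs_lt]
      have e : (f b - f a - f' a * Δ) / δ = f b / δ - f a / δ - f' a / (δ / Δ) := by
        rw [sub_div, sub_div, div_div_eq_mul_div]
      constructor <;> linarith [q0a.1, q0a.2, q0b.1, q0b.2, q1a.1, q1a.2, r2.1, r2.2, e]
    rw [show ((h0 (m+1) : ℝ)) - (h0 m : ℝ) - (h1 m : ℝ)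
        = ((h0 (m+1) - h0 m - h1 m : ℤ) : ℝ) by push_cast; ring] at this
    exact_mod_cast this
  · have : |((h0 m : ℝ)) - (h0 (m+1) : ℝ) + (h1 (m+1) : ℝ)| < 3 := by
      rw [abs_lt]
      have e : (f b - f a - f' b * Δ) / δ = f b / δ - f a / δ - f' b / (δ / Δ) := by
        rw [sub_div, sub_div, div_div_eq_mul_div]
      constructor <;> linarith [q0a.1, q0a.2, q0b.1, q0b.2, q1b.1, q1b.2, r3.1, r3.2, e]
    rw [show ((h0 m : ℝ)) - (h0 (m+1) : ℝ) + (h1 (m+1) : ℝ)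
        = ((h0 m - h0 (m+1) + h1 (m+1) : ℤ) : ℝ) by push_cast; ring] at this
    exact_mod_cast this
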